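/- Let σ be a permutation of {1,…,N} acting transitively on indices (for every pair i, j there is an integer m with σ^m(i) = j), and suppose W is invariant under σ, i.e., W_{σ(i),σ(j)} = W_{i,j} for all i, j. Then all row sums of W are equal and all column sums of W are equal; consequently μ_n = μ_1^n for all n ≥ 1 and κ_n = 0 for every n ≥ 2. (Networks with a rotational/translational connectivity symmetry have the motif cumulant structure of an Erdős–Rényi network.) -/

import Mathlib

open Matrix

/-- If `W` is invariant under a permutation `σ` acting transitively on indices
(`W_{σ(i),σ(j)} = W_{i,j}` and every index can be mapped to every other by a power of `σ`),
then all row sums of `W` are equal and all column sums of `W` are equal; consequently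
`μ_n = μ_1 ^ n` for all `n ≥ 1` and `κ_n = 0` for all `n ≥ 2`.  Networks with a
rotational/translational connectivity symmetry have the motif cumulant structure of an
Erdős–Rényi network. -/
theorem symmetric_network_motif_cumulants
    (N : ℕ) (hN : 0 < N) (W : Matrix (Fin N) (Fin N) ℂ)
    (μ κ : ℕ → ℂ)
    (hμ0 : μ 0 = 1)
    (hμ : ∀ n : ℕ, 1 ≤ n →
      μ n = (1 / (N : ℂ) ^ (n + 1)) * ∑ i : Fin N, ∑ j : Fin N, (W ^ n) i j)
    (hκ : ∀ n : ℕ, 1 ≤ n →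
      κ n = μ n - ∑ k ∈ Finset.Ico 1 n, κ k * μ (n - k))
    (σ : Equiv.Perm (Fin N))
    (htrans : ∀ i j : Fin N, ∃ m : ℕ, (σ ^ m) i = j)
    (hinv : ∀ i j : Fin N, W (σ i) (σ j) = W i j) :
    (∃ r : ℂ, ∀ i : Fin N, ∑ j : Fin N, W i j = r) ∧
    (∃ c : ℂ, ∀ j : Fin N, ∑ i : Fin N, W i j = c) ∧
    (∀ n : ℕ, 1 ≤ n → μ n = (μ 1) ^ n) ∧
    (∀ n : ℕ, 2 ≤ n → κ n = 0) := by
  have i0 : Fin N := ⟨0, hN⟩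
  -- row sums are σ-invariant
  have hrowσ : ∀ i : Fin N, ∑ j, W (σ i) j = ∑ j, W i j := by
    intro i
    calc ∑ j, W (σ i) j = ∑ j, W (σ i) (σ j) := (Equiv.sum_comp σ (fun j => W (σ i) j)).symm
      _ = ∑ j, W i j := by simp [hinv]
  have hcolσ : ∀ j : Fin N, ∑ i, W i (σ j) = ∑ i, W i j := by
    intro j
    calc ∑ i, W i (σ j) = ∑ i, W (σ i) (σ j) := (Equiv.sum_comp σ (fun i => W i (σ j))).symm
      _ = ∑ i, W i j := by simp [hinv]
  have hrowpow : ∀ (m : ℕ) (i : Fin N), ∑ j, W ((σ ^ m) i) j = ∑ j, W i j := by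
    intro m
    induction m with
    | zero => simp
    | succ m ih =>
      intro i
      have : (σ ^ (m + 1)) i = σ ((σ ^ m) i) := by
        rw [pow_succ']; rfl
      rw [this, hrowσ, ih]
  have hcolpow : ∀ (m : ℕ) (j : Fin N), ∑ i, W i ((σ ^ m) j) = ∑ i, W i j := by
    intro m
    induction m with
    | zero => simp
    | succ m ih =>
      intro j
      have : (σ ^ (m + 1)) j = σ ((σ ^ m) j) := by
        rw [pow_succ']; rfl
      rw [this, hcolσ, ih]
  set r : ℂ := ∑ j, W i0 j with hr
  set c : ℂ := ∑ i, W i i0 with hc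
  have hrow : ∀ i : Fin N, ∑ j, W i j = r := by
    intro i
    obtain ⟨m, hm⟩ := htrans i0 i
    rw [← hm, hrowpow]
  have hcol : ∀ j : Fin N, ∑ i, W i j = c := by
    intro j
    obtain ⟨m, hm⟩ := htrans i0 j
    rw [← hm, hcolpow]
  -- row sums of powers
  have hpow : ∀ (n : ℕ) (i : Fin N), ∑ j, (W ^ n) i j = r ^ n := by
    intro n
    induction n with
    | zero => intro i; simp [Matrix.one_apply]
    | succ n ih =>
      intro i
      have : W ^ (n + 1) = W * W ^ n := by rw [pow_succ']
      rw [this]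
      calc ∑ j, (W * W ^ n) i j = ∑ j, ∑ k, W i k * (W ^ n) k j := by
            simp [Matrix.mul_apply]
        _ = ∑ k, W i k * ∑ j, (W ^ n) k j := by
            rw [Finset.sum_comm]; simp [Finset.mul_sum]
        _ = ∑ k, W i k * r ^ n := by simp [ih]
        _ = r * r ^ n := by rw [← Finset.sum_mul, hrow]
        _ = r ^ (n + 1) := by ring
  have hNne : (N : ℂ) ≠ 0 := Nat.cast_ne_zero.mpr hN.ne'
  have hμval : ∀ n : ℕ, 1 ≤ n → μ n = (r / N) ^ n := by
    intro n hn
    rw [hμ n hn]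
    have : ∑ i : Fin N, ∑ j : Fin N, (W ^ n) i j = N * r ^ n := by
      simp [hpow]
    rw [this, div_pow]
    field_simp
    ring
  have hμ1 : μ 1 = r / N := by simpa using hμval 1 le_rfl
  have hμpow : ∀ n : ℕ, 1 ≤ n → μ n = (μ 1) ^ n := by
    intro n hn
    rw [hμval n hn, hμ1]
  have hκ1 : κ 1 = μ 1 := by simpa using hκ 1 le_rfl
  have hκ0 : ∀ n : ℕ, 2 ≤ n → κ n = 0 := by
    intro n
    induction n using Nat.strong_induction_on with
    | _ n ih =>
      intro hn
      have h1n : 1 ≤ n := le_trans (by norm_num) hn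
      rw [hκ n h1n]
      have hsum : ∑ k ∈ Finset.Ico 1 n, κ k * μ (n - k) = κ 1 * μ (n - 1) := by
        apply Finset.sum_eq_single_of_mem
        · exact Finset.mem_Ico.mpr ⟨le_rfl, hn⟩
        · intro k hk hk1
          obtain ⟨hk1', hkn⟩ := Finset.mem_Ico.mp hk
          have : 2 ≤ k := lt_of_le_of_ne hk1' (Ne.symm hk1)
          rw [ih k hkn this, zero_mul]
      rw [hsum, hκ1, hμpow n h1n, hμpow (n - 1) (by omega)]
      obtain ⟨m, rfl⟩ : ∃ m, n = m + 1 := ⟨n - 1, by omega⟩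
      rw [Nat.add_sub_cancel, pow_succ]
      ring
  exact ⟨⟨r, hrow⟩, ⟨c, hcol⟩, hμpow, hκ0⟩
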